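/- arXiv:math/0501488 — 4 statements merged into one kernel-verified Lean document; each statement's English description precedes it below -/
import Mathlib

section
/- Let H : ℝ³ → ℝ (ℝ³ the Euclidean space EuclideanSpace ℝ (Fin 3) with inner product ⟨·,·⟩) be positively homogeneous of degree 1 (H(t·x) = t·H(x) for all t ≥ 0 and x ∈ ℝ³) and twice continuously differentiable on ℝ³ ∖ {0}. Then H is convex on ℝ³ if and only if for every pair of orthonormal vectors a, b ∈ ℝ³ the function f(t) = H(cos t · a + sin t · b) satisfies f(t) + f''(t) ≥ 0 for all t ∈ ℝ. -/
open Real Set Filter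
open scoped RealInnerProductSpace Topology
set_option maxHeartbeats 1600000

lemma cd2_deriv {f : ℝ → ℝ} (hf : ContDiff ℝ 2 f) : ContDiff ℝ 1 (deriv f) := by
  have h2 : (2 : WithTop ℕ∞) = 1 + 1 := by norm_num
  rw [h2, contDiff_succ_iff_deriv] at hf
  exact hf.2.2

lemma cd2_diff {f : ℝ → ℝ} (hf : ContDiff ℝ 2 f) : Differentiable ℝ f :=
  hf.differentiable (by norm_num)

lemma cd2_diff_deriv {f : ℝ → ℝ} (hf : ContDiff ℝ 2 f) : Differentiable ℝ (deriv f) :=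
  (cd2_deriv hf).differentiable (by norm_num)

lemma hasDerivAt_cos_shift (φ θ : ℝ) :
    HasDerivAt (fun θ => Real.cos (θ - φ)) (-Real.sin (θ - φ)) θ := by
  simpa [Function.comp_def] using (Real.hasDerivAt_cos (θ - φ)).comp θ ((hasDerivAt_id θ).sub_const φ)

lemma hasDerivAt_sin_shift (φ θ : ℝ) :
    HasDerivAt (fun θ => Real.sin (θ - φ)) (Real.cos (θ - φ)) θ := by
  simpa [Function.comp_def] using (Real.hasDerivAt_sin (θ - φ)).comp θ ((hasDerivAt_id θ).sub_const φ)

lemma comparison_fwd {f : ℝ → ℝ} (hf : ContDiff ℝ 2 f)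
    (hineq : ∀ t, 0 ≤ f t + deriv (deriv f) t) (φ : ℝ) :
    ∀ θ, φ ≤ θ → θ ≤ φ + π →
      f φ * Real.cos (θ - φ) + deriv f φ * Real.sin (θ - φ) ≤ f θ := by
  set c0 := f φ with hc0
  set c1 := deriv f φ with hc1
  set v : ℝ → ℝ := fun θ => f θ - (c0 * Real.cos (θ - φ) + c1 * Real.sin (θ - φ)) with hv_def
  have hv : ∀ θ, HasDerivAt v
      (deriv f θ - (c0 * (-Real.sin (θ - φ)) + c1 * Real.cos (θ - φ))) θ := fun θ =>
    ((cd2_diff hf θ).hasDerivAt).sub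
      (((hasDerivAt_cos_shift φ θ).const_mul c0).add ((hasDerivAt_sin_shift φ θ).const_mul c1))
  have hvφ : v φ = 0 := by simp [hv_def, hc0]
  have hv'φ : deriv f φ - (c0 * (-Real.sin (φ - φ)) + c1 * Real.cos (φ - φ)) = 0 := by
    simp [hc1]
  set A : ℝ → ℝ := fun θ => deriv f θ * Real.sin (θ - φ) - f θ * Real.cos (θ - φ) + c0
    with hA_def
  have hA : ∀ θ, HasDerivAt A ((deriv (deriv f) θ + f θ) * Real.sin (θ - φ)) θ := by
    intro θ
    have h1 := ((cd2_diff_deriv hf θ).hasDerivAt).mul (hasDerivAt_sin_shift φ θ)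
    have h2 := ((cd2_diff hf θ).hasDerivAt).mul (hasDerivAt_cos_shift φ θ)
    have := (h1.sub h2).add_const c0
    convert this using 1
    · rfl
    · rfl
    · rfl
    · ring
  have hAcont : Continuous A := by
    rw [continuous_iff_continuousAt]; exact fun θ => (hA θ).continuousAt
  have hAmono : MonotoneOn A (Icc φ (φ + π)) := by
    apply monotoneOn_of_deriv_nonneg (convex_Icc _ _) hAcont.continuousOn
    · exact fun x _ => (hA x).differentiableAt.differentiableWithinAt
    · intro x hx
      rw [interior_Icc] at hx
      rw [(hA x).deriv]
      exact mul_nonneg (by linarith [hineq x])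
        (Real.sin_nonneg_of_nonneg_of_le_pi (by linarith [hx.1]) (by linarith [hx.2]))
  have hA0 : A φ = 0 := by simp [hA_def, hc0]
  have hAnn : ∀ x ∈ Icc φ (φ + π), 0 ≤ A x := by
    intro x hx
    have := hAmono (left_mem_Icc.mpr (by linarith [Real.pi_pos])) hx hx.1
    rw [hA0] at this; exact this
  -- the quotient function
  set h : ℝ → ℝ := fun θ => v θ / Real.sin (θ - φ) with hh_def
  have hsinpos : ∀ θ ∈ Ioo φ (φ + π), 0 < Real.sin (θ - φ) := by
    intro θ hθ
    exact Real.sin_pos_of_pos_of_lt_pi (by linarith [hθ.1]) (by linarith [hθ.2])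
  have hh : ∀ θ ∈ Ioo φ (φ + π), HasDerivAt h (A θ / (Real.sin (θ - φ)) ^ 2) θ := by
    intro θ hθ
    have hd := (hv θ).div (hasDerivAt_sin_shift φ θ) (ne_of_gt (hsinpos θ hθ))
    have pyth := Real.sin_sq_add_cos_sq (θ - φ)
    have hnum : (deriv f θ - (c0 * -Real.sin (θ - φ) + c1 * Real.cos (θ - φ))) * Real.sin (θ - φ)
        - v θ * Real.cos (θ - φ) = A θ := by
      simp only [hv_def, hA_def]
      linear_combination c0 * pyth
    rw [hnum] at hd
    exact hd
  have hhmono : MonotoneOn h (Ioo φ (φ + π)) := by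
    apply monotoneOn_of_deriv_nonneg (convex_Ioo _ _)
    · exact fun θ hθ => (hh θ hθ).continuousAt.continuousWithinAt
    · rw [interior_Ioo]
      exact fun θ hθ => (hh θ hθ).differentiableAt.differentiableWithinAt
    · intro θ hθ
      rw [interior_Ioo] at hθ
      rw [(hh θ hθ).deriv]
      exact div_nonneg (hAnn θ (Ioo_subset_Icc_self hθ)) (sq_nonneg _)
  have hlim : Tendsto h (𝓝[>] φ) (𝓝 0) := by
    have hmono' := nhdsWithin_mono φ (fun s (hs : s ∈ Ioi φ) => (ne_of_gt hs : s ≠ φ))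
    have T1 : Tendsto (fun s => v s / (s - φ)) (𝓝[>] φ) (𝓝 0) := by
      have hvφ' : HasDerivAt v 0 φ := by rw [← hv'φ]; exact hv φ
      have h1 := (hasDerivAt_iff_tendsto_slope.mp hvφ').mono_left hmono'
      refine h1.congr (fun s => ?_)
      rw [slope_def_field, hvφ, sub_zero]
    have T2 : Tendsto (fun s => Real.sin (s - φ) / (s - φ)) (𝓝[>] φ) (𝓝 1) := by
      have hs' : HasDerivAt (fun θ => Real.sin (θ - φ)) 1 φ := by
        simpa using hasDerivAt_sin_shift φ φ
      have h1 := (hasDerivAt_iff_tendsto_slope.mp hs').mono_left hmono'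
      refine h1.congr (fun s => ?_)
      rw [slope_def_field]
      simp
    have T2' := T2.inv₀ one_ne_zero
    rw [inv_one] at T2'
    have T := T1.mul T2'
    rw [zero_mul] at T
    refine T.congr' ?_
    filter_upwards [Ioo_mem_nhdsGT_of_mem
      (show φ ∈ Ico φ (φ + π) from left_mem_Ico.mpr (by linarith [Real.pi_pos]))] with s hs
    have h1 : s - φ ≠ 0 := sub_ne_zero.mpr (ne_of_gt hs.1)
    have h2 : Real.sin (s - φ) ≠ 0 := ne_of_gt (hsinpos s hs)
    simp only [hh_def]
    field_simp
  have hmain : ∀ θ ∈ Ioo φ (φ + π), 0 ≤ v θ := by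
    intro θ hθ
    have hev : ∀ᶠ s in 𝓝[>] φ, h s ≤ h θ := by
      filter_upwards [Ioo_mem_nhdsGT_of_mem
        (show φ ∈ Ico φ θ from left_mem_Ico.mpr hθ.1)] with s hs
      exact hhmono ⟨hs.1, lt_trans hs.2 hθ.2⟩ hθ (le_of_lt hs.2)
    have hge : 0 ≤ h θ := le_of_tendsto hlim hev
    have := mul_nonneg hge (le_of_lt (hsinpos θ hθ))
    rwa [hh_def, div_mul_cancel₀ _ (ne_of_gt (hsinpos θ hθ))] at this
  intro θ hθ1 hθ2
  have key : 0 ≤ v θ := by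
    rcases eq_or_lt_of_le hθ1 with rfl | h1
    · rw [hvφ]
    · rcases eq_or_lt_of_le hθ2 with rfl | h2
      · have hvcont : Continuous v := by
          rw [continuous_iff_continuousAt]; exact fun θ => (hv θ).continuousAt
        have Tv : Tendsto v (𝓝[<] (φ + π)) (𝓝 (v (φ + π))) :=
          (hvcont.tendsto _).mono_left nhdsWithin_le_nhds
        refine ge_of_tendsto Tv ?_
        filter_upwards [Ioo_mem_nhdsLT_of_mem
          (show φ + π ∈ Ioc φ (φ + π) from right_mem_Ioc.mpr (by linarith [Real.pi_pos]))]
          with s hs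
        exact hmain s hs
      · exact hmain θ ⟨h1, h2⟩
  simp only [hv_def] at key
  linarith [key]

lemma comparison_bwd {f : ℝ → ℝ} (hf : ContDiff ℝ 2 f)
    (hineq : ∀ t, 0 ≤ f t + deriv (deriv f) t) (φ : ℝ) :
    ∀ θ, φ - π ≤ θ → θ ≤ φ →
      f φ * Real.cos (θ - φ) + deriv f φ * Real.sin (θ - φ) ≤ f θ := by
  intro θ h1 h2
  set g : ℝ → ℝ := fun s => f (2 * φ - s) with hg_def
  have hg : ContDiff ℝ 2 g := hf.comp (contDiff_const.sub contDiff_id)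
  have hg1 : deriv g = fun s => -deriv f (2 * φ - s) :=
    funext fun s => deriv_comp_const_sub f _ s
  have hg2 : ∀ s, deriv (deriv g) s = deriv (deriv f) (2 * φ - s) := by
    intro s
    rw [hg1]
    have : deriv (fun s => -deriv f (2 * φ - s)) s
        = -deriv (fun s => deriv f (2 * φ - s)) s := deriv.neg
    rw [this, deriv_comp_const_sub (deriv f), neg_neg]
  have hineq' : ∀ t, 0 ≤ g t + deriv (deriv g) t := by
    intro t; rw [hg2]
    have : (2 : ℝ) * φ - t = 2 * φ - t := rfl
    simpa [hg_def] using hineq (2 * φ - t)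
  have key := comparison_fwd hg hineq' φ (2 * φ - θ) (by linarith) (by linarith)
  have eφ : 2 * φ - φ = φ := by ring
  have e1 : g φ = f φ := by rw [hg_def]; simp only [eφ]
  have e2 : deriv g φ = -deriv f φ := by rw [hg1]; simp only [eφ]
  have e3 : 2 * φ - θ - φ = -(θ - φ) := by ring
  have e4 : 2 * φ - (2 * φ - θ) = θ := by ring
  rw [e1, e2, e3, Real.cos_neg, Real.sin_neg] at key
  have e5 : g (2 * φ - θ) = f θ := by rw [hg_def]; simp only [e4]
  rw [e5] at key
  linarith [key]

lemma circle_support {f : ℝ → ℝ} (hf : ContDiff ℝ 2 f)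
    (hineq : ∀ t, 0 ≤ f t + deriv (deriv f) t) (φ θ : ℝ) (h : |θ - φ| ≤ π) :
    f φ * Real.cos (θ - φ) + deriv f φ * Real.sin (θ - φ) ≤ f θ := by
  rw [abs_le] at h
  rcases le_total φ θ with hle | hle
  · exact comparison_fwd hf hineq φ θ hle (by linarith [h.2])
  · exact comparison_bwd hf hineq φ θ (by linarith [h.1]) hle

lemma second_deriv_nonneg_of_isLocalMin {f : ℝ → ℝ} (hf : ContDiff ℝ 2 f)
    (hmin : IsLocalMin f 0) : 0 ≤ deriv (deriv f) 0 := by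
  by_contra hneg
  push_neg at hneg
  have h0 : deriv f 0 = 0 := hmin.deriv_eq_zero
  have hd : HasDerivAt (deriv f) (deriv (deriv f) 0) 0 := (cd2_diff_deriv hf 0).hasDerivAt
  have hslope := hasDerivAt_iff_tendsto_slope.mp hd
  have hev1 : ∀ᶠ s in 𝓝[>] (0:ℝ), slope (deriv f) 0 s < 0 :=
    ((hslope.mono_left (nhdsWithin_mono 0 (fun s (hs : s ∈ Ioi (0:ℝ)) =>
      (ne_of_gt hs : s ≠ 0)))).eventually (eventually_lt_nhds hneg))
  have hev2 : ∀ᶠ s in 𝓝[>] (0:ℝ), f 0 ≤ f s :=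
    hmin.filter_mono nhdsWithin_le_nhds
  obtain ⟨u, hu, hsub⟩ := mem_nhdsGT_iff_exists_Ioo_subset.mp (hev1.and hev2)
  have hupos : (0:ℝ) < u := hu
  have hm : u / 2 ∈ Ioo (0:ℝ) u := ⟨by linarith, by linarith⟩
  have hderiv_neg : ∀ s ∈ Ioo (0:ℝ) (u/2), deriv f s < 0 := by
    intro s hs
    have hs' : s ∈ Ioo (0:ℝ) u := ⟨hs.1, by linarith [hs.2]⟩
    have := (hsub hs').1
    rw [slope_def_field, h0, sub_zero, sub_zero] at this
    have hspos : (0:ℝ) < s := hs.1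
    rcases div_neg_iff.mp this with ⟨_, hc⟩ | ⟨hc, _⟩
    · linarith
    · exact hc
  have hanti : StrictAntiOn f (Icc (0:ℝ) (u/2)) := by
    apply strictAntiOn_of_deriv_neg (convex_Icc _ _) (cd2_diff hf).continuous.continuousOn
    intro x hx
    rw [interior_Icc] at hx
    exact hderiv_neg x hx
  have hlt : f (u/2) < f 0 :=
    hanti (left_mem_Icc.mpr (by linarith)) (right_mem_Icc.mpr (by linarith)) (by linarith)
  have hge : f 0 ≤ f (u/2) := (hsub hm).2
  linarith

lemma convex_tangent_le {q : ℝ → ℝ} (hq : ConvexOn ℝ Set.univ q) {d : ℝ}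
    (hd : HasDerivAt q d 0) (w : ℝ) : q 0 + d * w ≤ q w := by
  rcases lt_trichotomy w 0 with h | h | h
  · have := hq.slope_le_of_hasDerivAt (mem_univ w) (mem_univ 0) h hd
    rw [slope_def_field] at this
    have hw : (0:ℝ) < 0 - w := by linarith
    rw [div_le_iff₀ hw] at this
    nlinarith
  · subst h; simp
  · have := hq.le_slope_of_hasDerivAt (mem_univ 0) (mem_univ w) h hd
    rw [slope_def_field] at this
    have hw : (0:ℝ) < w - 0 := by linarith
    rw [le_div_iff₀ hw] at this
    nlinarith

local notation "E3" => EuclideanSpace ℝ (Fin 3)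

lemma norm_combo_sq {a b : E3} (ha : ‖a‖ = 1) (hb : ‖b‖ = 1) (hab : ⟪a, b⟫ = 0)
    (p q : ℝ) : ‖p • a + q • b‖ ^ 2 = p ^ 2 + q ^ 2 := by
  rw [norm_add_sq_real, norm_smul, norm_smul, real_inner_smul_left, real_inner_smul_right,
    hab, ha, hb]
  simp [Real.norm_eq_abs, sq_abs]

lemma circle_unit {a b : E3} (ha : ‖a‖ = 1) (hb : ‖b‖ = 1) (hab : ⟪a, b⟫ = 0) (t : ℝ) :
    ‖Real.cos t • a + Real.sin t • b‖ = 1 := by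
  have h := norm_combo_sq ha hb hab (Real.cos t) (Real.sin t)
  rw [Real.cos_sq_add_sin_sq] at h
  nlinarith [norm_nonneg (Real.cos t • a + Real.sin t • b)]

lemma circle_ne_zero {a b : E3} (ha : ‖a‖ = 1) (hb : ‖b‖ = 1) (hab : ⟪a, b⟫ = 0) (t : ℝ) :
    Real.cos t • a + Real.sin t • b ≠ 0 := by
  intro h
  have := circle_unit ha hb hab t
  rw [h, norm_zero] at this
  norm_num at this

lemma circle_curve_contDiff (a b : E3) :
    ContDiff ℝ 2 (fun s : ℝ => Real.cos s • a + Real.sin s • b) :=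
  ((Real.contDiff_cos.of_le le_top).smul contDiff_const).add
    ((Real.contDiff_sin.of_le le_top).smul contDiff_const)

lemma circle_contDiff {H : E3 → ℝ} (hsmooth : ContDiffOn ℝ 2 H {(0 : E3)}ᶜ)
    {a b : E3} (ha : ‖a‖ = 1) (hb : ‖b‖ = 1) (hab : ⟪a, b⟫ = 0) :
    ContDiff ℝ 2 (fun s : ℝ => H (Real.cos s • a + Real.sin s • b)) := by
  have := hsmooth.comp_contDiff (circle_curve_contDiff a b)
    (fun s => circle_ne_zero ha hb hab s)
  simpa [Function.comp_def] using this

lemma circle_curve_hasDerivAt (a b : E3) (t : ℝ) :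
    HasDerivAt (fun s : ℝ => Real.cos s • a + Real.sin s • b)
      (-Real.sin t • a + Real.cos t • b) t :=
  ((Real.hasDerivAt_cos t).smul_const a).add ((Real.hasDerivAt_sin t).smul_const b)

lemma H_diffAt {H : E3 → ℝ} (hsmooth : ContDiffOn ℝ 2 H {(0 : E3)}ᶜ)
    {x : E3} (hx : x ≠ 0) : DifferentiableAt ℝ H x :=
  ((hsmooth.differentiableOn (by norm_num)).differentiableAt
    (isOpen_compl_singleton.mem_nhds hx))

lemma circle_hasDerivAt {H : E3 → ℝ} (hsmooth : ContDiffOn ℝ 2 H {(0 : E3)}ᶜ)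
    {a b : E3} (ha : ‖a‖ = 1) (hb : ‖b‖ = 1) (hab : ⟪a, b⟫ = 0) (t : ℝ) :
    HasDerivAt (fun s : ℝ => H (Real.cos s • a + Real.sin s • b))
      (fderiv ℝ H (Real.cos t • a + Real.sin t • b) (-Real.sin t • a + Real.cos t • b)) t :=
  ((H_diffAt hsmooth (circle_ne_zero ha hb hab t)).hasFDerivAt).comp_hasDerivAt t
    (circle_curve_hasDerivAt a b t)

lemma forward_dir {H : E3 → ℝ}
    (hhom : ∀ t : ℝ, 0 ≤ t → ∀ x : E3, H (t • x) = t * H x)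
    (hsmooth : ContDiffOn ℝ 2 H {(0 : E3)}ᶜ)
    (hconv : ConvexOn ℝ Set.univ H)
    {a b : E3} (ha : ‖a‖ = 1) (hb : ‖b‖ = 1) (hab : ⟪a, b⟫ = 0) (t : ℝ) :
    0 ≤ (fun s : ℝ => H (Real.cos s • a + Real.sin s • b)) t +
      deriv (deriv (fun s : ℝ => H (Real.cos s • a + Real.sin s • b))) t := by
  set f := fun s : ℝ => H (Real.cos s • a + Real.sin s • b) with hf_def
  have hf : ContDiff ℝ 2 f := circle_contDiff hsmooth ha hb hab
  set x := Real.cos t • a + Real.sin t • b with hx_def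
  set y := -Real.sin t • a + Real.cos t • b with hy_def
  set d := fderiv ℝ H x y with hd_def
  have hxne : x ≠ 0 := circle_ne_zero ha hb hab t
  set q := fun w : ℝ => H (x + w • y) with hq_def
  have hqeq : q = H ∘ (AffineMap.lineMap x (x + y) : ℝ →ᵃ[ℝ] E3) := by
    funext w
    simp only [hq_def, Function.comp_apply, AffineMap.lineMap_apply_module]
    congr 1
    module
  have hqconv : ConvexOn ℝ Set.univ q := by
    have hA := hconv.comp_affineMap (AffineMap.lineMap x (x + y) : ℝ →ᵃ[ℝ] E3)
    rw [Set.preimage_univ] at hA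
    rw [hqeq]
    exact hA
  have h0y : x + (0:ℝ) • y = x := by simp
  have hqd : HasDerivAt q d 0 := by
    have hcurve : HasDerivAt (fun w : ℝ => x + w • y) ((1:ℝ) • y) 0 :=
      ((hasDerivAt_id (0:ℝ)).smul_const y).const_add x
    rw [one_smul] at hcurve
    have hH : HasFDerivAt H (fderiv ℝ H x) (x + (0:ℝ) • y) := by
      rw [h0y]; exact (H_diffAt hsmooth hxne).hasFDerivAt
    exact hH.comp_hasDerivAt 0 hcurve
  have htan : ∀ w, q 0 + d * w ≤ q w := convex_tangent_le hqconv hqd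
  have hq0 : q 0 = f t := by rw [hq_def]; simp [hf_def, hx_def]
  have hiden : ∀ s : ℝ, Real.cos (t + s) • a + Real.sin (t + s) • b
      = Real.cos s • x + Real.sin s • y := by
    intro s
    rw [Real.cos_add, Real.sin_add, hx_def, hy_def]
    module
  have hineq2 : ∀ s : ℝ, |s| < π/2 → Real.cos s * f t + Real.sin s * d ≤ f (t + s) := by
    intro s hs
    rw [abs_lt] at hs
    have hcos : 0 < Real.cos s := Real.cos_pos_of_mem_Ioo ⟨hs.1, hs.2⟩
    have e0 : Real.cos s * Real.tan s = Real.sin s := by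
      rw [Real.tan_eq_sin_div_cos]
      field_simp
    have e1 : f (t + s) = Real.cos s * q (Real.tan s) := by
      rw [hf_def]
      show H (Real.cos (t+s) • a + Real.sin (t+s) • b) = _
      rw [hiden s, hq_def]
      rw [← hhom (Real.cos s) hcos.le (x + Real.tan s • y)]
      congr 1
      rw [← e0]
      module
    have := htan (Real.tan s)
    have h2 := mul_le_mul_of_nonneg_left this hcos.le
    rw [← e1] at h2
    calc Real.cos s * f t + Real.sin s * d
        = Real.cos s * (q 0 + d * Real.tan s) := by rw [hq0, ← e0]; ring
      _ ≤ f (t + s) := h2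
  set g := fun s : ℝ => f (t + s) - (f t * Real.cos s + d * Real.sin s) with hg_def
  have hg0 : g 0 = 0 := by simp [hg_def]
  have hgmin : IsLocalMin g 0 := by
    have hmem : Ioo (-(π/2)) (π/2) ∈ 𝓝 (0:ℝ) :=
      Ioo_mem_nhds (by linarith [Real.pi_pos]) (by linarith [Real.pi_pos])
    filter_upwards [hmem] with s hs
    rw [hg0]
    have := hineq2 s (abs_lt.mpr ⟨hs.1, hs.2⟩)
    simp only [hg_def]
    linarith [this]
  have hgC2 : ContDiff ℝ 2 g := by
    apply ContDiff.sub
    · exact hf.comp (contDiff_const.add contDiff_id)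
    · exact (contDiff_const.mul (Real.contDiff_cos.of_le le_top)).add
        (contDiff_const.mul (Real.contDiff_sin.of_le le_top))
  have h2 := second_deriv_nonneg_of_isLocalMin hgC2 hgmin
  have hdg : deriv g = fun s => deriv f (t + s) + f t * Real.sin s - d * Real.cos s := by
    funext s
    have c1 : HasDerivAt (fun s : ℝ => f (t + s)) (deriv f (t + s)) s := by
      have := ((cd2_diff hf (t+s)).hasDerivAt).comp s ((hasDerivAt_id s).const_add t)
      simpa [Function.comp_def] using this
    have c2 : HasDerivAt (fun s : ℝ => f t * Real.cos s + d * Real.sin s)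
        (f t * (-Real.sin s) + d * Real.cos s) s :=
      ((Real.hasDerivAt_cos s).const_mul (f t)).add ((Real.hasDerivAt_sin s).const_mul d)
    have hgs : HasDerivAt g (deriv f (t + s) + f t * Real.sin s - d * Real.cos s) s := by
      have := c1.sub c2
      convert this using 1
      · rfl
      · rfl
      · rfl
      · ring
    exact hgs.deriv
  have hddg : deriv (deriv g) 0 = deriv (deriv f) t + f t := by
    rw [hdg]
    have c1 : HasDerivAt (fun s : ℝ => deriv f (t + s)) (deriv (deriv f) (t + 0)) 0 := by
      have := ((cd2_diff_deriv hf (t+0)).hasDerivAt).comp 0 ((hasDerivAt_id 0).const_add t)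
      simpa [Function.comp_def] using this
    have c2 : HasDerivAt (fun s : ℝ => f t * Real.sin s) (f t * Real.cos 0) 0 :=
      (Real.hasDerivAt_sin 0).const_mul (f t)
    have c3 : HasDerivAt (fun s : ℝ => d * Real.cos s) (d * (-Real.sin 0)) 0 :=
      (Real.hasDerivAt_cos 0).const_mul d
    have htot := (c1.add c2).sub c3
    rw [show (fun s => deriv f (t + s) + f t * Real.sin s - d * Real.cos s) = ((fun s => deriv f (t + s)) + fun s => f t * Real.sin s) - fun s => d * Real.cos s from rfl, htot.deriv]
    simp
  rw [hddg] at h2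
  simp only [hf_def] at h2 ⊢
  linarith [h2]

lemma exists_unit_orth (a : E3) (ha : a ≠ 0) : ∃ b : E3, ‖b‖ = 1 ∧ ⟪a, b⟫ = 0 := by
  have hdim : Module.finrank ℝ (EuclideanSpace ℝ (Fin 3)) = 3 := finrank_euclideanSpace_fin
  have h1 := Submodule.finrank_add_finrank_orthogonal (𝕜 := ℝ) (ℝ ∙ a)
  have h2 : Module.finrank ℝ (ℝ ∙ a) = 1 := finrank_span_singleton ha
  have hKne : ((ℝ ∙ a)ᗮ : Submodule ℝ (EuclideanSpace ℝ (Fin 3))) ≠ ⊥ := by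
    intro hbot
    rw [hbot] at h1
    rw [h2, finrank_bot, hdim] at h1
    norm_num at h1
  obtain ⟨v, hvmem, hvne⟩ := Submodule.exists_mem_ne_zero_of_ne_bot hKne
  refine ⟨(‖v‖⁻¹ : ℝ) • v, norm_smul_inv_norm hvne, ?_⟩
  rw [real_inner_smul_right]
  have hav : ⟪a, v⟫ = 0 := by
    have := (Submodule.mem_orthogonal (ℝ ∙ a) v).mp hvmem a
      (Submodule.mem_span_singleton_self a)
    exact this
  rw [hav, mul_zero]

lemma H_subadd {H : E3 → ℝ}
    (hhom : ∀ t : ℝ, 0 ≤ t → ∀ x : E3, H (t • x) = t * H x)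
    (hsmooth : ContDiffOn ℝ 2 H {(0 : E3)}ᶜ)
    (hcirc : ∀ a b : E3, ‖a‖ = 1 → ‖b‖ = 1 → ⟪a, b⟫ = 0 → ∀ t : ℝ,
      0 ≤ (fun s : ℝ => H (Real.cos s • a + Real.sin s • b)) t +
        deriv (deriv (fun s : ℝ => H (Real.cos s • a + Real.sin s • b))) t) :
    ∀ x y : E3, H (x + y) ≤ H x + H y := by
  have H0 : H 0 = 0 := by simpa using hhom 0 le_rfl 0
  have hsupp : ∀ a b : E3, ‖a‖ = 1 → ‖b‖ = 1 → ⟪a, b⟫ = 0 → ∀ φ θ, |θ - φ| ≤ π →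
      H (Real.cos φ • a + Real.sin φ • b) * Real.cos (θ - φ)
        + deriv (fun s : ℝ => H (Real.cos s • a + Real.sin s • b)) φ * Real.sin (θ - φ)
        ≤ H (Real.cos θ • a + Real.sin θ • b) := by
    intro a b ha hb hab φ θ hθ
    exact circle_support (circle_contDiff hsmooth ha hb hab)
      (fun t => hcirc a b ha hb hab t) φ θ hθ
  have hminus : ∀ a : E3, ‖a‖ = 1 → 0 ≤ H a + H (-a) := by
    intro a ha
    have hane : a ≠ 0 := by intro h; rw [h, norm_zero] at ha; norm_num at ha
    obtain ⟨b, hb, hab⟩ := exists_unit_orth a hane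
    have key := hsupp a b ha hb hab 0 π
      (by rw [sub_zero, abs_of_pos Real.pi_pos])
    simp only [Real.cos_zero, Real.sin_zero, one_smul, zero_smul, add_zero, sub_zero,
      Real.cos_pi, Real.sin_pi, mul_zero, neg_one_smul] at key
    linarith [key]
  intro x y
  rcases eq_or_ne x 0 with rfl | hx
  · simp [H0]
  rcases eq_or_ne y 0 with rfl | hy
  · simp [H0]
  set r := ‖x‖ with hr_def
  have hr : 0 < r := norm_pos_iff.mpr hx
  set a := (r⁻¹ : ℝ) • x with ha_def
  have ha : ‖a‖ = 1 := norm_smul_inv_norm hx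
  have hane : a ≠ 0 := by intro h; rw [h, norm_zero] at ha; norm_num at ha
  have hxa : x = r • a := by
    rw [ha_def, smul_smul, mul_inv_cancel₀ hr.ne', one_smul]
  have hHx : H x = r * H a := by rw [hxa]; exact hhom r hr.le a
  set c := ⟪a, y⟫ with hc_def
  set b0 := y - c • a with hb0_def
  have hab0 : ⟪a, b0⟫ = 0 := by
    rw [hb0_def, inner_sub_right, real_inner_smul_right, real_inner_self_eq_norm_sq, ha]
    ring
  rcases eq_or_ne b0 0 with hb0z | hb0z
  · -- degenerate case : y = c • a
    have hyca : y = c • a := sub_eq_zero.mp hb0z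
    have hm := hminus a ha
    rcases le_or_gt 0 c with hc | hc
    · -- c ≥ 0
      have hHy : H y = c * H a := by rw [hyca]; exact hhom c hc a
      have hxy : x + y = (r + c) • a := by rw [hxa, hyca, add_smul]
      have hHxy : H (x + y) = (r + c) * H a := by
        rw [hxy]; exact hhom (r + c) (by linarith) a
      rw [hHx, hHy, hHxy]; ring_nf; linarith
    · -- c < 0
      have hyca' : y = (-c) • (-a) := by rw [hyca, smul_neg, neg_smul, neg_neg]
      have hHy : H y = (-c) * H (-a) := by rw [hyca']; exact hhom (-c) (by linarith) (-a)
      rcases le_or_gt 0 (r + c) with hrc | hrc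
      · have hxy : x + y = (r + c) • a := by rw [hxa, hyca, add_smul]
        have hHxy : H (x + y) = (r + c) * H a := by rw [hxy]; exact hhom (r + c) hrc a
        rw [hHx, hHy, hHxy]
        nlinarith [hm, hc]
      · have hxy : x + y = (-(r + c)) • (-a) := by
          rw [hxa, hyca, smul_neg, neg_smul, neg_neg, add_smul]
        have hHxy : H (x + y) = (-(r + c)) * H (-a) := by
          rw [hxy]; exact hhom (-(r + c)) (by linarith) (-a)
        rw [hHx, hHy, hHxy]
        nlinarith [hm, hr]
  · -- generic case
    set m := ‖b0‖ with hm_def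
    have hmpos : 0 < m := norm_pos_iff.mpr hb0z
    set b := (m⁻¹ : ℝ) • b0 with hb_def
    have hbnorm : ‖b‖ = 1 := norm_smul_inv_norm hb0z
    have hab : ⟪a, b⟫ = 0 := by rw [hb_def, real_inner_smul_right, hab0, mul_zero]
    have hy' : y = c • a + m • b := by
      rw [hb_def, smul_inv_smul₀ hmpos.ne', hb0_def]
      abel
    set s' := ‖y‖ with hs'_def
    have hs' : 0 < s' := norm_pos_iff.mpr hy
    have hynorm : s' ^ 2 = c ^ 2 + m ^ 2 := by
      rw [hs'_def]
      nth_rewrite 1 [hy']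
      exact norm_combo_sq ha hbnorm hab c m
    set P := r + c with hP_def
    have hQ : 0 < m := hmpos
    have hPQ : 0 < P ^ 2 + m ^ 2 := by positivity
    set ρ := Real.sqrt (P ^ 2 + m ^ 2) with hρ_def
    have hρ : 0 < ρ := Real.sqrt_pos.mpr hPQ
    have hρ2 : ρ ^ 2 = P ^ 2 + m ^ 2 := Real.sq_sqrt hPQ.le
    -- angle γ
    have hPρ1 : -1 ≤ P / ρ := by
      rw [neg_le, ← neg_div]
      rw [div_le_one hρ]
      nlinarith [hρ2, sq_nonneg (ρ + P)]
    have hPρ2 : P / ρ ≤ 1 := by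
      rw [div_le_one hρ]
      nlinarith [hρ2, sq_nonneg (ρ - P)]
    set γ := Real.arccos (P / ρ) with hγ_def
    have hγmem : 0 ≤ γ ∧ γ ≤ π := ⟨Real.arccos_nonneg _, Real.arccos_le_pi _⟩
    have hcosγ : Real.cos γ = P / ρ := Real.cos_arccos hPρ1 hPρ2
    have hsinγ : Real.sin γ = m / ρ := by
      rw [hγ_def, Real.sin_arccos]
      have e : 1 - (P / ρ) ^ 2 = (m / ρ) ^ 2 := by
        field_simp
        linarith [hρ2]
      rw [e, Real.sqrt_sq (div_nonneg hQ.le hρ.le)]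
    -- angle β
    have hcs1 : -1 ≤ c / s' := by
      rw [neg_le, ← neg_div, div_le_one hs']
      nlinarith [hynorm, sq_nonneg (s' + c)]
    have hcs2 : c / s' ≤ 1 := by
      rw [div_le_one hs']
      nlinarith [hynorm, sq_nonneg (s' - c)]
    set β := Real.arccos (c / s') with hβ_def
    have hβmem : 0 ≤ β ∧ β ≤ π := ⟨Real.arccos_nonneg _, Real.arccos_le_pi _⟩
    have hcosβ : Real.cos β = c / s' := Real.cos_arccos hcs1 hcs2
    have hsinβ : Real.sin β = m / s' := by
      rw [hβ_def, Real.sin_arccos]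
      have e : 1 - (c / s') ^ 2 = (m / s') ^ 2 := by
        field_simp
        linarith [hynorm]
      rw [e, Real.sqrt_sq (div_nonneg hmpos.le hs'.le)]
    -- representations
    have hxrep : x = r • (Real.cos 0 • a + Real.sin 0 • b) := by
      rw [Real.cos_zero, Real.sin_zero, one_smul, zero_smul, add_zero, hxa]
    have hyrep : y = s' • (Real.cos β • a + Real.sin β • b) := by
      rw [hcosβ, hsinβ, hy']
      match_scalars <;> field_simp <;> ring
    have hxyrep : x + y = ρ • (Real.cos γ • a + Real.sin γ • b) := by
      rw [hcosγ, hsinγ, hxa, hy', hP_def]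
      match_scalars <;> field_simp <;> ring
    -- H values
    have hHy : H y = s' * H (Real.cos β • a + Real.sin β • b) := by
      rw [hyrep]; exact hhom s' hs'.le _
    have hHx' : H x = r * H (Real.cos 0 • a + Real.sin 0 • b) := by
      rw [hxrep]; exact hhom r hr.le _
    have hHxy : H (x + y) = ρ * H (Real.cos γ • a + Real.sin γ • b) := by
      rw [hxyrep]; exact hhom ρ hρ.le _
    -- support inequalities
    have I1 := hsupp a b ha hbnorm hab γ 0
      (by rw [zero_sub, abs_neg, abs_of_nonneg hγmem.1]; exact hγmem.2)
    have I2 := hsupp a b ha hbnorm hab γ β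
      (by rw [abs_le]; constructor <;> [linarith [hβmem.1, hγmem.2]; linarith [hβmem.2, hγmem.1]])
    set fγ := H (Real.cos γ • a + Real.sin γ • b) with hfγ_def
    set dγ := deriv (fun s : ℝ => H (Real.cos s • a + Real.sin s • b)) γ with hdγ_def
    have hA : r * Real.cos (0 - γ) + s' * Real.cos (β - γ) = ρ := by
      rw [zero_sub, Real.cos_neg, Real.cos_sub, hcosγ, hsinγ, hcosβ, hsinβ]
      have e : r * (P / ρ) + s' * (c / s' * (P / ρ) + m / s' * (m / ρ))
          = (P ^ 2 + m ^ 2) / ρ := by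
        rw [hP_def]
        field_simp
        ring
      rw [e, ← hρ2, pow_two, mul_div_assoc, div_self hρ.ne', mul_one]
    have hB : r * Real.sin (0 - γ) + s' * Real.sin (β - γ) = 0 := by
      rw [zero_sub, Real.sin_neg, Real.sin_sub, hcosγ, hsinγ, hcosβ, hsinβ]
      field_simp
      ring
    have hI1' := mul_le_mul_of_nonneg_left I1 hr.le
    have hI2' := mul_le_mul_of_nonneg_left I2 hs'.le
    have hkey : ρ * fγ ≤ r * H (Real.cos 0 • a + Real.sin 0 • b)
        + s' * H (Real.cos β • a + Real.sin β • b) := by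
      have e : ρ * fγ = r * (fγ * Real.cos (0 - γ) + dγ * Real.sin (0 - γ))
          + s' * (fγ * Real.cos (β - γ) + dγ * Real.sin (β - γ)) := by
        linear_combination (-fγ) * hA + (-dγ) * hB
      rw [e]
      exact add_le_add hI1' hI2'
    rw [hHxy, hHx', hHy]
    exact hkey

theorem convexity_iff_great_circle_inequality
    (H : EuclideanSpace ℝ (Fin 3) → ℝ)
    (hhom : ∀ t : ℝ, 0 ≤ t → ∀ x : EuclideanSpace ℝ (Fin 3), H (t • x) = t * H x)
    (hsmooth : ContDiffOn ℝ 2 H {(0 : EuclideanSpace ℝ (Fin 3))}ᶜ) :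
    ConvexOn ℝ Set.univ H ↔
      ∀ a b : EuclideanSpace ℝ (Fin 3), ‖a‖ = 1 → ‖b‖ = 1 → ⟪a, b⟫ = 0 →
        ∀ t : ℝ,
          0 ≤ (fun s : ℝ => H (Real.cos s • a + Real.sin s • b)) t +
            deriv (deriv (fun s : ℝ => H (Real.cos s • a + Real.sin s • b))) t := by
  constructor
  · intro hconv a b ha hb hab t
    exact forward_dir hhom hsmooth hconv ha hb hab t
  · intro hcirc
    have hsub := H_subadd hhom hsmooth hcirc
    refine ⟨convex_univ, ?_⟩
    intro x _ y _ p q hp hq hpq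
    have h1 : H (p • x + q • y) ≤ H (p • x) + H (q • y) := hsub _ _
    rw [hhom p hp x, hhom q hq y] at h1
    simpa using h1
end

section
/- Let H : ℝ³ → ℝ be positively homogeneous of degree 1 and twice continuously differentiable on ℝ³ ∖ {0}, and suppose that for every pair of orthonormal vectors a, b ∈ ℝ³ the function f(φ) = H(cos φ · a + sin φ · b) satisfies f(φ) + f''(φ) = 0 for all φ ∈ ℝ. Then there exists a₀ ∈ ℝ³ such that H(x) = ⟨a₀, x⟩ for all x ∈ ℝ³. -/
open Real
open scoped RealInnerProductSpace

private lemma exists_angle' (c s : ℝ) (h : c^2 + s^2 = 1) :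
    ∃ φ, Real.cos φ = c ∧ Real.sin φ = s := by
  have hc1 : -1 ≤ c := by nlinarith
  have hc2 : c ≤ 1 := by nlinarith
  have h1c : Real.sqrt (1 - c^2) = |s| := by
    rw [show 1 - c^2 = s^2 by linarith, Real.sqrt_sq_eq_abs]
  rcases le_or_gt 0 s with hs | hs
  · exact ⟨Real.arccos c, Real.cos_arccos hc1 hc2,
      by rw [Real.sin_arccos, h1c, abs_of_nonneg hs]⟩
  · exact ⟨-Real.arccos c, by rw [Real.cos_neg]; exact Real.cos_arccos hc1 hc2,
      by rw [Real.sin_neg, Real.sin_arccos, h1c, abs_of_neg hs]; ring⟩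

private lemma ode_lemma' (f : ℝ → ℝ) (hf : ContDiff ℝ 2 f)
    (hode : ∀ x, f x + deriv (deriv f) x = 0) :
    ∀ x, f x = f 0 * Real.cos x + deriv f 0 * Real.sin x := by
  have hf1 : ContDiff ℝ 1 (deriv f) := by
    have := (contDiff_succ_iff_deriv (n := 1)).mp (by exact_mod_cast hf)
    exact this.2.2
  have hdf : ∀ x, HasDerivAt f (deriv f x) x :=
    fun x => ((hf.differentiable (by norm_num)) x).hasDerivAt
  have hddf : ∀ x, HasDerivAt (deriv f) (deriv (deriv f) x) x :=
    fun x => ((hf1.differentiable (by norm_num)) x).hasDerivAt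
  set c0 := f 0 with hc0
  set c1 := deriv f 0 with hc1
  set g : ℝ → ℝ := fun x => f x - (c0 * Real.cos x + c1 * Real.sin x) with hg
  set g1 : ℝ → ℝ := fun x => deriv f x - (c0 * (-Real.sin x) + c1 * Real.cos x) with hg1
  have hgd : ∀ x, HasDerivAt g (g1 x) x := by
    intro x
    exact (hdf x).sub (((Real.hasDerivAt_cos x).const_mul c0).add
      ((Real.hasDerivAt_sin x).const_mul c1))
  have hg1d : ∀ x, HasDerivAt g1 (-(g x)) x := by
    intro x
    have h1 : HasDerivAt g1 (deriv (deriv f) x - (c0 * (-Real.cos x) + c1 * (-Real.sin x))) x := by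
      refine (hddf x).sub (HasDerivAt.add ?_ ((Real.hasDerivAt_cos x).const_mul c1))
      have heq1 : (fun y => c0 * -Real.sin y) = fun y => -(c0 * Real.sin y) := by
        funext y; ring
      rw [heq1, show c0 * -Real.cos x = -(c0 * Real.cos x) by ring]
      exact ((Real.hasDerivAt_sin x).const_mul c0).neg
    convert h1 using 1
    have := hode x
    simp only [hg]
    ring_nf
    linarith
  set E : ℝ → ℝ := fun x => g x ^ 2 + g1 x ^ 2 with hE
  have hEd : ∀ x, HasDerivAt E 0 x := by
    intro x
    have := ((hgd x).pow 2).add ((hg1d x).pow 2)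
    refine this.congr_deriv ?_
    ring
  have hconst : ∀ x, E x = E 0 :=
    fun x => is_const_of_deriv_eq_zero (fun y => (hEd y).differentiableAt)
      (fun y => (hEd y).deriv) x 0
  have hg0 : g 0 = 0 := by simp [hg, hc0]
  have hg10 : g1 0 = 0 := by simp [hg1, hc1]
  intro x
  have hx : E x = 0 := by rw [hconst x, hE]; simp [hg0, hg10]
  have hgx : g x = 0 := by
    have h1 : g x ^ 2 + g1 x ^ 2 = 0 := hx
    nlinarith [sq_nonneg (g x), sq_nonneg (g1 x)]
  simp only [hg] at hgx
  linarith

theorem homogeneous_spherical_solution_is_linear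
    (H : EuclideanSpace ℝ (Fin 3) → ℝ)
    (hhom : ∀ t : ℝ, 0 ≤ t → ∀ x : EuclideanSpace ℝ (Fin 3), H (t • x) = t * H x)
    (hsmooth : ContDiffOn ℝ 2 H {(0 : EuclideanSpace ℝ (Fin 3))}ᶜ)
    (heq : ∀ a b : EuclideanSpace ℝ (Fin 3), ‖a‖ = 1 → ‖b‖ = 1 → ⟪a, b⟫ = 0 →
      ∀ φ : ℝ,
        H (Real.cos φ • a + Real.sin φ • b) +
          deriv (deriv (fun s : ℝ => H (Real.cos s • a + Real.sin s • b))) φ = 0) :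
    ∃ a₀ : EuclideanSpace ℝ (Fin 3),
      ∀ x : EuclideanSpace ℝ (Fin 3), H x = ⟪a₀, x⟫ := by
  -- norm of a combination on a great circle
  have hnorm : ∀ a b : EuclideanSpace ℝ (Fin 3), ‖a‖ = 1 → ‖b‖ = 1 → ⟪a, b⟫ = 0 →
      ∀ c s : ℝ, c^2 + s^2 = 1 → ‖c • a + s • b‖ = 1 := by
    intro a b ha hb hab c s h
    have h2 : ‖c • a + s • b‖ ^ 2 = 1 := by
      rw [norm_add_sq_real, norm_smul, norm_smul, real_inner_smul_left, real_inner_smul_right,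
        hab, ha, hb]
      simp [mul_pow, sq_abs]
      linarith
    nlinarith [norm_nonneg (c • a + s • b)]
  -- key lemma: H is "linear" along great circles
  have key : ∀ a b : EuclideanSpace ℝ (Fin 3), ‖a‖ = 1 → ‖b‖ = 1 → ⟪a, b⟫ = 0 →
      ∀ c s : ℝ, c^2 + s^2 = 1 → H (c • a + s • b) = c * H a + s * H b := by
    intro a b ha hb hab c s hcs
    set f : ℝ → ℝ := fun ψ : ℝ => H (Real.cos ψ • a + Real.sin ψ • b) with hf
    have hne : ∀ ψ : ℝ, Real.cos ψ • a + Real.sin ψ • b ≠ 0 := by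
      intro ψ hcontra
      have h1 : ‖Real.cos ψ • a + Real.sin ψ • b‖ = 1 :=
        hnorm a b ha hb hab _ _ (Real.cos_sq_add_sin_sq ψ)
      rw [hcontra] at h1
      simp at h1
    have hC : ContDiff ℝ 2 f := by
      have hγ : ContDiff ℝ 2 (fun φ : ℝ => Real.cos φ • a + Real.sin φ • b) :=
        ((Real.contDiff_cos.of_le le_top).smul contDiff_const).add
          ((Real.contDiff_sin.of_le le_top).smul contDiff_const)
      rw [← contDiffOn_univ]
      exact hsmooth.comp hγ.contDiffOn (fun x _ => hne x)
    have hode : ∀ x, f x + deriv (deriv f) x = 0 := heq a b ha hb hab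
    have hsol := ode_lemma' f hC hode
    have hf0 : f 0 = H a := by simp [hf]
    have hfpi : f (Real.pi / 2) = H b := by simp [hf]
    have hderiv0 : deriv f 0 = H b := by
      have := hsol (Real.pi / 2)
      rw [hfpi, Real.cos_pi_div_two, Real.sin_pi_div_two] at this
      linarith
    obtain ⟨φ, hφc, hφs⟩ := exists_angle' c s hcs
    have h2 : f φ = H a * c + H b * s := by
      rw [hsol φ, hφc, hφs, hf0, hderiv0]
    have h3 : H (c • a + s • b) = f φ := by
      show H (c • a + s • b) = H (Real.cos φ • a + Real.sin φ • b)
      rw [hφc, hφs]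
    rw [h3, h2]
    ring
  -- standard basis vectors
  set ee : Fin 3 → EuclideanSpace ℝ (Fin 3) := fun i => EuclideanSpace.single i 1 with hee
  have hee_norm : ∀ i, ‖ee i‖ = 1 := by
    intro i; simp [hee, EuclideanSpace.norm_single]
  have hee_orth : ∀ i j : Fin 3, i ≠ j → ⟪ee i, ee j⟫ = 0 := by
    intro i j h
    simp [hee, EuclideanSpace.inner_single_left, EuclideanSpace.single_apply, h.symm]
  -- H on unit sphere is given by coordinates
  have hunit : ∀ x : EuclideanSpace ℝ (Fin 3), ‖x‖ = 1 →
      H x = x 0 * H (ee 0) + x 1 * H (ee 1) + x 2 * H (ee 2) := by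
    intro x hx
    have hsum : x 0 ^ 2 + x 1 ^ 2 + x 2 ^ 2 = 1 := by
      have h1 := EuclideanSpace.norm_eq x
      rw [hx] at h1
      have := Real.sqrt_eq_one.mp h1.symm
      simpa [Fin.sum_univ_three, sq_abs] using this
    set r : ℝ := Real.sqrt (x 0 ^ 2 + x 1 ^ 2) with hrdef
    have hr2 : r ^ 2 = x 0 ^ 2 + x 1 ^ 2 := Real.sq_sqrt (by positivity)
    rcases (Real.sqrt_nonneg (x 0 ^ 2 + x 1 ^ 2)).eq_or_lt with h0 | h0
    · -- r = 0 : x is ± e₂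
      have hr0 : r = 0 := h0.symm
      have hx0 : x 0 = 0 := by nlinarith
      have hx1 : x 1 = 0 := by nlinarith
      have hx2 : x 2 ^ 2 + (0:ℝ) ^ 2 = 1 := by nlinarith
      have hxe : x = x 2 • ee 2 + (0:ℝ) • ee 0 := by
        ext i
        fin_cases i <;> simp [hee, EuclideanSpace.single_apply, hx0, hx1]
      have := key (ee 2) (ee 0) (hee_norm 2) (hee_norm 0)
        (hee_orth 2 0 (by decide)) (x 2) 0 hx2
      rw [← hxe] at this
      rw [this, hx0, hx1]
      ring
    · -- r > 0
      set u : EuclideanSpace ℝ (Fin 3) :=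
        (WithLp.equiv 2 (Fin 3 → ℝ)).symm ![x 0 / r, x 1 / r, 0] with hu
      have hrne : r ≠ 0 := ne_of_gt h0
      have hu1 : ‖u‖ = 1 := by
        have hsumu : (∑ i, ‖u i‖^2) = 1 := by
          simp only [hu, Fin.sum_univ_three, WithLp.equiv_symm_apply, PiLp.toLp_apply, Real.norm_eq_abs,
            sq_abs, Matrix.cons_val_zero, Matrix.cons_val_one, Matrix.head_cons,
            Matrix.cons_val_two, Matrix.tail_cons, div_pow]
          field_simp
          linarith
        rw [EuclideanSpace.norm_eq, hsumu, Real.sqrt_one]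
      have hue : ⟪u, ee 2⟫ = 0 := by
        simp [hu, hee, PiLp.inner_apply, Fin.sum_univ_three, EuclideanSpace.single_apply,
          WithLp.equiv_symm_apply, PiLp.toLp_apply]
      have hxdec : x = r • u + x 2 • ee 2 := by
        ext i
        fin_cases i <;>
          simp [hu, hee, EuclideanSpace.single_apply, WithLp.equiv_symm_apply, PiLp.toLp_apply] <;>
          field_simp
      have hrx2 : r ^ 2 + x 2 ^ 2 = 1 := by rw [hr2]; linarith
      have step1 : H x = r * H u + x 2 * H (ee 2) := by
        conv_lhs => rw [hxdec]
        exact key u (ee 2) hu1 (hee_norm 2) hue r (x 2) hrx2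
      have hudec : u = (x 0 / r) • ee 0 + (x 1 / r) • ee 1 := by
        ext i
        fin_cases i <;>
          simp [hu, hee, EuclideanSpace.single_apply, WithLp.equiv_symm_apply, PiLp.toLp_apply]
      have hcs : (x 0 / r) ^ 2 + (x 1 / r) ^ 2 = 1 := by
        field_simp
        linarith
      have step2 : H u = (x 0 / r) * H (ee 0) + (x 1 / r) * H (ee 1) := by
        rw [hudec]
        exact key (ee 0) (ee 1) (hee_norm 0) (hee_norm 1)
          (hee_orth 0 1 (by decide)) _ _ hcs
      rw [step1, step2]
      field_simp
      try ring
  -- the linear functional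
  refine ⟨(WithLp.equiv 2 (Fin 3 → ℝ)).symm ![H (ee 0), H (ee 1), H (ee 2)], ?_⟩
  have hinner : ∀ y : EuclideanSpace ℝ (Fin 3),
      ⟪((WithLp.equiv 2 (Fin 3 → ℝ)).symm ![H (ee 0), H (ee 1), H (ee 2)] :
        EuclideanSpace ℝ (Fin 3)), y⟫
        = H (ee 0) * y 0 + H (ee 1) * y 1 + H (ee 2) * y 2 := by
    intro y
    simp [PiLp.inner_apply, Fin.sum_univ_three, WithLp.equiv_symm_apply, PiLp.toLp_apply]
    ring
  intro x
  rcases eq_or_ne x 0 with hx0 | hx0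
  · subst hx0
    have hzero : H 0 = 0 := by
      have := hhom 0 le_rfl 0
      simpa using this
    rw [hzero, inner_zero_right]
  · set v : EuclideanSpace ℝ (Fin 3) := ‖x‖⁻¹ • x with hv
    have hv1 : ‖v‖ = 1 := norm_smul_inv_norm hx0
    have hxv : ‖x‖ • v = x := smul_inv_smul₀ (norm_ne_zero_iff.mpr hx0) x
    have h1 : H x = ‖x‖ * H v := by
      conv_lhs => rw [← hxv]
      exact hhom ‖x‖ (norm_nonneg x) v
    have h2 : H v = ⟪((WithLp.equiv 2 (Fin 3 → ℝ)).symm ![H (ee 0), H (ee 1), H (ee 2)] :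
        EuclideanSpace ℝ (Fin 3)), v⟫ := by
      rw [hunit v hv1, hinner v]
      ring
    rw [h1, h2, ← real_inner_smul_right, hxv]
end

section
/- Let B ⊂ ℝ³ be a convex body whose support function H (extended to ℝ³ positively homogeneously of degree 1) is three times continuously differentiable on ℝ³ ∖ {0}. Fix a unit vector Ω and orthonormal vectors e₁, e₂ orthogonal to Ω, and set u(τ) = cos τ·e₁ + sin τ·e₂, E(τ) = −sin τ·e₁ + cos τ·e₂, p(ν,τ) = cos ν·u(τ) + sin ν·Ω. For each (ν,τ) define R*(ν,τ) = f_{ν,τ}(0) + f_{ν,τ}''(0), where f_{ν,τ}(s) = H(cos s·p(ν,τ) + sin s·E(τ)). Then ∫_0^{2π} (∂R*/∂ν)(0,τ) dτ = 0. -/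
open Real

lemma aux_slice1 {V : Type*} [NormedAddCommGroup V] [NormedSpace ℝ V]
    {K : ℝ × ℝ → V} {ν s : ℝ} (h : DifferentiableAt ℝ K (ν, s)) :
    HasDerivAt (fun ν' => K (ν', s)) (fderiv ℝ K (ν, s) (1, 0)) ν := by
  have := h.hasFDerivAt.comp_hasDerivAt ν ((hasDerivAt_id ν).prodMk (hasDerivAt_const ν s))
  simpa [Function.comp_def] using this

lemma aux_slice2 {V : Type*} [NormedAddCommGroup V] [NormedSpace ℝ V]
    {K : ℝ × ℝ → V} {ν s : ℝ} (h : DifferentiableAt ℝ K (ν, s)) :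
    HasDerivAt (fun s' => K (ν, s')) (fderiv ℝ K (ν, s) (0, 1)) s := by
  have := h.hasFDerivAt.comp_hasDerivAt s ((hasDerivAt_const s ν).prodMk (hasDerivAt_id s))
  simpa [Function.comp_def] using this

lemma aux_fderiv_eval {K : ℝ × ℝ → ((ℝ × ℝ) →L[ℝ] ℝ)} {q : ℝ × ℝ}
    (h : DifferentiableAt ℝ K q) (v w : ℝ × ℝ) :
    fderiv ℝ (fun q' => K q' w) q v = fderiv ℝ K q v w := by
  have h2 := ((ContinuousLinearMap.apply ℝ ℝ w).hasFDerivAt.comp q h.hasFDerivAt).fderiv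
  have h3 : fderiv ℝ (fun q' => K q' w) q
      = (ContinuousLinearMap.apply ℝ ℝ w).comp (fderiv ℝ K q) := by
    exact h2
  rw [h3]; rfl

lemma aux_key {V : Type*} [NormedAddCommGroup V] [InnerProductSpace ℝ V]
    (H : V → ℝ) (hsmooth : ContDiffOn ℝ 3 H {(0 : V)}ᶜ)
    (u : ℝ → V) (Ω b : V) (τ : ℝ)
    (hvec : ∀ s : ℝ, Real.cos s • u τ + Real.sin s • b = u (τ + s))
    (hcne : ∀ ν s : ℝ,
      (Real.cos s * Real.cos ν) • u τ + (Real.cos s * Real.sin ν) • Ω + Real.sin s • b ≠ 0)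
    (hφ : ContDiff ℝ 2 (fun σ : ℝ => fderiv ℝ H (u σ) Ω)) :
    deriv (fun ν : ℝ =>
      (fun s : ℝ => H (Real.cos s • (Real.cos ν • u τ + Real.sin ν • Ω) + Real.sin s • b)) 0 +
        deriv (deriv (fun s : ℝ =>
          H (Real.cos s • (Real.cos ν • u τ + Real.sin ν • Ω) + Real.sin s • b))) 0) 0
      = deriv (deriv (fun σ : ℝ => fderiv ℝ H (u σ) Ω)) τ := by
  set φ : ℝ → ℝ := fun σ => fderiv ℝ H (u σ) Ω with hφdef
  set c : ℝ × ℝ → V := fun q =>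
    (Real.cos q.2 * Real.cos q.1) • u τ + (Real.cos q.2 * Real.sin q.1) • Ω + Real.sin q.2 • b
    with hcdef
  have hcsmooth : ContDiff ℝ 3 c :=
    ((((Real.contDiff_cos.comp contDiff_snd).mul (Real.contDiff_cos.comp contDiff_fst)).smul
        contDiff_const).add
      (((Real.contDiff_cos.comp contDiff_snd).mul (Real.contDiff_sin.comp contDiff_fst)).smul
        contDiff_const)).add
      ((Real.contDiff_sin.comp contDiff_snd).smul contDiff_const)
  set K : ℝ × ℝ → ℝ := fun q => H (c q) with hKdef
  have hK : ContDiff ℝ 3 K := by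
    rw [← contDiffOn_univ]
    exact hsmooth.comp hcsmooth.contDiffOn (fun q _ => by simpa using hcne q.1 q.2)
  have hKd : Differentiable ℝ K := hK.differentiable (by norm_num)
  have hK' : ContDiff ℝ 2 (fderiv ℝ K) := hK.fderiv_right (by norm_num)
  set F1 : ℝ × ℝ → ℝ := fun q => fderiv ℝ K q (1, 0) with hF1def
  set F2 : ℝ × ℝ → ℝ := fun q => fderiv ℝ K q (0, 1) with hF2def
  have hF1 : ContDiff ℝ 2 F1 :=
    (ContinuousLinearMap.apply ℝ ℝ ((1:ℝ), (0:ℝ))).contDiff.comp hK'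
  have hF2 : ContDiff ℝ 2 F2 :=
    (ContinuousLinearMap.apply ℝ ℝ ((0:ℝ), (1:ℝ))).contDiff.comp hK'
  have hF2' : ContDiff ℝ 1 (fderiv ℝ F2) := hF2.fderiv_right (by norm_num)
  set F21 : ℝ × ℝ → ℝ := fun q => fderiv ℝ F2 q (1, 0) with hF21def
  set F22 : ℝ × ℝ → ℝ := fun q => fderiv ℝ F2 q (0, 1) with hF22def
  have hF21 : ContDiff ℝ 1 F21 :=
    (ContinuousLinearMap.apply ℝ ℝ ((1:ℝ), (0:ℝ))).contDiff.comp hF2'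
  have hF22 : ContDiff ℝ 1 F22 :=
    (ContinuousLinearMap.apply ℝ ℝ ((0:ℝ), (1:ℝ))).contDiff.comp hF2'
  -- H is differentiable away from 0
  have hHdiff : ∀ x : V, x ≠ 0 → DifferentiableAt ℝ H x := fun x hx =>
    (hsmooth.contDiffAt (isOpen_compl_singleton.mem_nhds (by simpa using hx))).differentiableAt
      (by norm_num)
  -- the inner function equals the slice of K
  have hfun : ∀ ν : ℝ,
      (fun s : ℝ => H (Real.cos s • (Real.cos ν • u τ + Real.sin ν • Ω) + Real.sin s • b))
        = fun s : ℝ => K (ν, s) := by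
    intro ν; funext s
    simp only [hKdef, hcdef]
    congr 1
    rw [smul_add, smul_smul, smul_smul]
  -- second s-derivative equals F22
  have e1 : ∀ ν s : ℝ, deriv (fun s' => K (ν, s')) s = F2 (ν, s) := fun ν s =>
    (aux_slice2 (hKd (ν, s))).deriv
  have e2 : ∀ ν : ℝ, deriv (deriv (fun s => K (ν, s))) 0 = F22 (ν, 0) := by
    intro ν
    rw [show deriv (fun s => K (ν, s)) = fun s => F2 (ν, s) from funext (e1 ν)]
    exact (aux_slice2 ((hF2.differentiable (by norm_num)) (ν, 0))).deriv
  -- rewrite the target function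
  have hfun2 : (fun ν : ℝ =>
      (fun s : ℝ => H (Real.cos s • (Real.cos ν • u τ + Real.sin ν • Ω) + Real.sin s • b)) 0 +
        deriv (deriv (fun s : ℝ =>
          H (Real.cos s • (Real.cos ν • u τ + Real.sin ν • Ω) + Real.sin s • b))) 0)
      = fun ν : ℝ => K (ν, 0) + F22 (ν, 0) := by
    funext ν
    rw [hfun ν, e2 ν]
  rw [hfun2]
  -- derivative of the sum
  have hd1 : HasDerivAt (fun ν : ℝ => K (ν, 0)) (fderiv ℝ K (0, 0) (1, 0)) 0 :=
    aux_slice1 (hKd (0, 0))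
  have hd2 : HasDerivAt (fun ν : ℝ => F22 (ν, 0)) (fderiv ℝ F22 (0, 0) (1, 0)) 0 :=
    aux_slice1 ((hF22.differentiable one_ne_zero) (0, 0))
  rw [(hd1.fun_add hd2).deriv]
  -- value of F1 on the ν = 0 slice
  have hc0 : ∀ s : ℝ, c (0, s) = u (τ + s) := by
    intro s
    simp only [hcdef, Real.cos_zero, Real.sin_zero, mul_one, mul_zero, zero_smul, add_zero]
    exact hvec s
  have hF1val : ∀ s : ℝ, F1 (0, s) = Real.cos s * φ (τ + s) := by
    intro s
    have hγ : HasDerivAt (fun ν => c (ν, s)) (Real.cos s • Ω) 0 := by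
      have h1 : HasDerivAt (fun ν : ℝ => Real.cos s * Real.cos ν)
          (Real.cos s * -Real.sin 0) 0 := (Real.hasDerivAt_cos 0).const_mul (Real.cos s)
      have h2 : HasDerivAt (fun ν : ℝ => Real.cos s * Real.sin ν)
          (Real.cos s * Real.cos 0) 0 := (Real.hasDerivAt_sin 0).const_mul (Real.cos s)
      have h3 := ((h1.smul_const (u τ)).add (h2.smul_const Ω)).add
        (hasDerivAt_const (0:ℝ) (Real.sin s • b))
      simp only [Real.sin_zero, Real.cos_zero, mul_zero, mul_one, neg_zero, zero_smul,
        zero_add, add_zero] at h3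
      exact h3
    have hHD : HasDerivAt (fun ν => K (ν, s)) (fderiv ℝ H (c (0, s)) (Real.cos s • Ω)) 0 :=
      ((hHdiff _ (hcne 0 s)).hasFDerivAt).comp_hasDerivAt 0 hγ
    have := (aux_slice1 (hKd (0, s))).unique hHD
    rw [hF1def]
    simp only [this, hc0 s, map_smul, smul_eq_mul, hφdef]
  -- compute the first term
  have term1 : fderiv ℝ K (0, 0) (1, 0) = φ τ := by
    have := hF1val 0
    simp only [hF1def] at this
    rw [this]
    simp
  -- symmetry of second derivatives of K
  have hF2diffd : Differentiable ℝ (fderiv ℝ K) := hK'.differentiable (by norm_num)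
  have hsymK : ∀ q : ℝ × ℝ,
      fderiv ℝ (fderiv ℝ K) q (1, 0) (0, 1) = fderiv ℝ (fderiv ℝ K) q (0, 1) (1, 0) :=
    fun q => (hK.contDiffAt.isSymmSndFDerivAt (by norm_num)) _ _
  have hs5 : ∀ s : ℝ, F21 (0, s) = deriv (fun s' => F1 (0, s')) s := by
    intro s
    have a1 : F21 (0, s) = fderiv ℝ (fderiv ℝ K) (0, s) (1, 0) (0, 1) := by
      simp only [hF21def, hF2def]
      exact aux_fderiv_eval (hF2diffd (0, s)) (1, 0) (0, 1)
    have a2 : fderiv ℝ (fderiv ℝ K) (0, s) (0, 1) (1, 0) = fderiv ℝ F1 (0, s) (0, 1) := by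
      simp only [hF1def]
      exact (aux_fderiv_eval (hF2diffd (0, s)) (0, 1) (1, 0)).symm
    rw [a1, hsymK (0, s), a2]
    exact ((aux_slice2 ((hF1.differentiable (by norm_num)) (0, s))).deriv).symm
  -- the second term
  have term2 : fderiv ℝ F22 (0, 0) (1, 0)
      = deriv (deriv (fun s => Real.cos s * φ (τ + s))) 0 := by
    have b1 : fderiv ℝ F22 (0, 0) (1, 0) = fderiv ℝ (fderiv ℝ F2) (0, 0) (1, 0) (0, 1) := by
      simp only [hF22def]
      exact aux_fderiv_eval ((hF2'.differentiable one_ne_zero) (0, 0)) (1, 0) (0, 1)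
    have b2 := ((hF2.contDiffAt (x := ((0:ℝ), (0:ℝ)))).isSymmSndFDerivAt (by simp)) ((1:ℝ), (0:ℝ)) ((0:ℝ), (1:ℝ))
    have b3 : fderiv ℝ (fderiv ℝ F2) (0, 0) (0, 1) (1, 0) = fderiv ℝ F21 (0, 0) (0, 1) := by
      simp only [hF21def]
      exact (aux_fderiv_eval ((hF2'.differentiable one_ne_zero) (0, 0)) (0, 1) (1, 0)).symm
    have b4 : fderiv ℝ F21 (0, 0) (0, 1) = deriv (fun s => F21 (0, s)) 0 :=
      ((aux_slice2 ((hF21.differentiable one_ne_zero) (0, 0))).deriv).symm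
    have b6 : (fun s' : ℝ => F1 (0, s')) = fun s' => Real.cos s' * φ (τ + s') := funext hF1val
    have b7 : (fun s : ℝ => F21 (0, s)) = deriv (fun s' => Real.cos s' * φ (τ + s')) := by
      funext s; rw [hs5 s, b6]
    rw [b1, b2, b3, b4, b7]
  rw [term1, term2]
  -- compute the second derivative of ψ s = cos s * φ (τ + s)
  have hφd : Differentiable ℝ φ := hφ.differentiable (by norm_num)
  have hφ'cd : ContDiff ℝ 1 (deriv φ) := by
    have h2 : ContDiff ℝ ((1 : WithTop ℕ∞) + 1) φ := by
      rw [show ((1 : WithTop ℕ∞) + 1) = 2 by norm_num]; exact hφ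
    exact (contDiff_succ_iff_deriv.mp h2).2.2
  have hφ'd : Differentiable ℝ (deriv φ) := hφ'cd.differentiable one_ne_zero
  have hψ1 : ∀ s : ℝ, HasDerivAt (fun s' => φ (τ + s')) (deriv φ (τ + s)) s := by
    intro s
    have h0 : HasDerivAt (fun s' : ℝ => τ + s') 1 s := (hasDerivAt_id s).const_add τ
    simpa [Function.comp_def] using ((hφd (τ + s)).hasDerivAt).comp s h0
  have hψ2 : ∀ s : ℝ, HasDerivAt (fun s' => deriv φ (τ + s')) (deriv (deriv φ) (τ + s)) s := by
    intro s
    have h0 : HasDerivAt (fun s' : ℝ => τ + s') 1 s := (hasDerivAt_id s).const_add τ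
    simpa [Function.comp_def] using ((hφ'd (τ + s)).hasDerivAt).comp s h0
  have hψderiv : deriv (fun s => Real.cos s * φ (τ + s))
      = fun s => -Real.sin s * φ (τ + s) + Real.cos s * deriv φ (τ + s) := by
    funext s
    simpa using ((Real.hasDerivAt_cos s).fun_mul (hψ1 s)).deriv
  rw [hψderiv]
  have t1 : HasDerivAt (fun s => -Real.sin s * φ (τ + s))
      (-Real.cos 0 * φ (τ + 0) + -Real.sin 0 * deriv φ (τ + 0)) 0 :=
    (Real.hasDerivAt_sin 0).neg.mul (hψ1 0)
  have t2 : HasDerivAt (fun s => Real.cos s * deriv φ (τ + s))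
      (-Real.sin 0 * deriv φ (τ + 0) + Real.cos 0 * deriv (deriv φ) (τ + 0)) 0 :=
    (Real.hasDerivAt_cos 0).mul (hψ2 0)
  rw [(t1.fun_add t2).deriv]
  simp

open scoped RealInnerProductSpace

theorem belt_derivative_integral_vanishes
    (B : Set (EuclideanSpace ℝ (Fin 3)))
    (hBconv : Convex ℝ B) (hBcomp : IsCompact B) (hBint : (interior B).Nonempty)
    (H : EuclideanSpace ℝ (Fin 3) → ℝ)
    (hH : ∀ x : EuclideanSpace ℝ (Fin 3), H x = sSup ((fun y => ⟪x, y⟫) '' B))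
    (hsmooth : ContDiffOn ℝ 3 H {(0 : EuclideanSpace ℝ (Fin 3))}ᶜ)
    (Ω e₁ e₂ : EuclideanSpace ℝ (Fin 3))
    (hΩ : ‖Ω‖ = 1) (he₁ : ‖e₁‖ = 1) (he₂ : ‖e₂‖ = 1)
    (h₁₂ : ⟪e₁, e₂⟫ = 0) (h₁Ω : ⟪e₁, Ω⟫ = 0) (h₂Ω : ⟪e₂, Ω⟫ = 0)
    (u E : ℝ → EuclideanSpace ℝ (Fin 3)) (p : ℝ → ℝ → EuclideanSpace ℝ (Fin 3))
    (hu : ∀ τ : ℝ, u τ = Real.cos τ • e₁ + Real.sin τ • e₂)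
    (hE : ∀ τ : ℝ, E τ = (-Real.sin τ) • e₁ + Real.cos τ • e₂)
    (hp : ∀ ν τ : ℝ, p ν τ = Real.cos ν • u τ + Real.sin ν • Ω)
    (Rstar : ℝ → ℝ → ℝ)
    (hR : ∀ ν τ : ℝ, Rstar ν τ =
      (fun s : ℝ => H (Real.cos s • p ν τ + Real.sin s • E τ)) 0 +
        deriv (deriv (fun s : ℝ => H (Real.cos s • p ν τ + Real.sin s • E τ))) 0) :
    ∫ τ in (0:ℝ)..(2 * Real.pi), deriv (fun ν : ℝ => Rstar ν τ) 0 = 0 := by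
  -- basic inner product facts
  have h₁₁ : ⟪e₁, e₁⟫ = 1 := by
    rw [real_inner_self_eq_norm_mul_norm, he₁]; norm_num
  have h₂₂ : ⟪e₂, e₂⟫ = 1 := by
    rw [real_inner_self_eq_norm_mul_norm, he₂]; norm_num
  have hΩΩ : ⟪Ω, Ω⟫ = 1 := by
    rw [real_inner_self_eq_norm_mul_norm, hΩ]; norm_num
  have h₂₁ : ⟪e₂, e₁⟫ = 0 := by rw [real_inner_comm]; exact h₁₂
  have hΩ₁ : ⟪Ω, e₁⟫ = 0 := by rw [real_inner_comm]; exact h₁Ω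
  have hΩ₂ : ⟪Ω, e₂⟫ = 0 := by rw [real_inner_comm]; exact h₂Ω
  -- inner products of the moving frame
  have huu : ∀ σ : ℝ, ⟪u σ, u σ⟫ = 1 := by
    intro σ
    simp only [hu, inner_add_left, inner_add_right, real_inner_smul_left, real_inner_smul_right,
      h₁₁, h₂₂, h₁₂, h₂₁]
    ring_nf
    linear_combination Real.sin_sq_add_cos_sq σ
  have hune : ∀ σ : ℝ, u σ ≠ 0 := by
    intro σ h0
    have := huu σ
    rw [h0, inner_zero_left] at this
    exact one_ne_zero this.symm
  -- u is a rotation: cos s • u τ + sin s • E τ = u (τ + s)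
  have hvec : ∀ τ s : ℝ, Real.cos s • u τ + Real.sin s • E τ = u (τ + s) := by
    intro τ s
    rw [hu, hE, hu, Real.cos_add, Real.sin_add]
    module
  -- the vector c (ν, s) is never zero
  have hcne : ∀ τ ν s : ℝ,
      (Real.cos s * Real.cos ν) • u τ + (Real.cos s * Real.sin ν) • Ω + Real.sin s • E τ ≠ 0 := by
    intro τ ν s h0
    have huE : ⟪u τ, E τ⟫ = 0 := by
      simp only [hu, hE, inner_add_left, inner_add_right, real_inner_smul_left,
        real_inner_smul_right, h₁₁, h₂₂, h₁₂, h₂₁]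
      ring
    have hEu : ⟪E τ, u τ⟫ = 0 := by rw [real_inner_comm]; exact huE
    have huΩ : ⟪u τ, Ω⟫ = 0 := by
      simp only [hu, inner_add_left, real_inner_smul_left, h₁Ω, h₂Ω]; ring
    have hΩu : ⟪Ω, u τ⟫ = 0 := by rw [real_inner_comm]; exact huΩ
    have hEΩ : ⟪E τ, Ω⟫ = 0 := by
      simp only [hE, inner_add_left, real_inner_smul_left, h₁Ω, h₂Ω]; ring
    have hΩE : ⟪Ω, E τ⟫ = 0 := by rw [real_inner_comm]; exact hEΩ
    have hEE : ⟪E τ, E τ⟫ = 1 := by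
      simp only [hE, inner_add_left, inner_add_right, real_inner_smul_left,
        real_inner_smul_right, h₁₁, h₂₂, h₁₂, h₂₁]
      ring_nf
      linear_combination Real.sin_sq_add_cos_sq τ
    have hinner : ⟪(Real.cos s * Real.cos ν) • u τ + (Real.cos s * Real.sin ν) • Ω
        + Real.sin s • E τ,
        (Real.cos s * Real.cos ν) • u τ + (Real.cos s * Real.sin ν) • Ω
        + Real.sin s • E τ⟫ = 1 := by
      simp only [inner_add_left, inner_add_right, real_inner_smul_left, real_inner_smul_right,
        huu τ, hEE, huE, hEu, huΩ, hΩu, hEΩ, hΩE, hΩΩ]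
      ring_nf
      linear_combination (Real.cos s)^2 * Real.sin_sq_add_cos_sq ν + Real.sin_sq_add_cos_sq s
    rw [h0, inner_zero_left] at hinner
    exact one_ne_zero hinner.symm
  -- smoothness of φ
  have hueq : u = fun σ => Real.cos σ • e₁ + Real.sin σ • e₂ := funext hu
  have hucd : ContDiff ℝ 2 u := by
    rw [hueq]
    exact (Real.contDiff_cos.smul contDiff_const).add (Real.contDiff_sin.smul contDiff_const)
  have hfder2 : ContDiffOn ℝ 2 (fderiv ℝ H) {(0 : EuclideanSpace ℝ (Fin 3))}ᶜ :=
    hsmooth.fderiv_of_isOpen isOpen_compl_singleton (by norm_num)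
  have h1 : ContDiff ℝ 2 (fun σ : ℝ => fderiv ℝ H (u σ)) := by
    rw [← contDiffOn_univ]
    exact hfder2.comp hucd.contDiffOn (fun σ _ => by simpa using hune σ)
  have hφ2 : ContDiff ℝ 2 (fun σ : ℝ => fderiv ℝ H (u σ) Ω) :=
    (ContinuousLinearMap.apply ℝ ℝ Ω).contDiff.comp h1
  set φ : ℝ → ℝ := fun σ => fderiv ℝ H (u σ) Ω with hφdef
  -- the key pointwise identity
  have key : ∀ τ : ℝ, deriv (fun ν : ℝ => Rstar ν τ) 0 = deriv (deriv φ) τ := by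
    intro τ
    have hfun : (fun ν : ℝ => Rstar ν τ) = fun ν : ℝ =>
        (fun s : ℝ => H (Real.cos s • (Real.cos ν • u τ + Real.sin ν • Ω)
          + Real.sin s • E τ)) 0 +
        deriv (deriv (fun s : ℝ => H (Real.cos s • (Real.cos ν • u τ + Real.sin ν • Ω)
          + Real.sin s • E τ))) 0 := by
      funext ν
      rw [hR ν τ, hp ν τ]
    rw [hfun]
    exact aux_key H hsmooth u Ω (E τ) τ (hvec τ) (hcne τ) hφ2
  -- rewrite the integrand
  rw [intervalIntegral.integral_congr
    (g := fun τ => deriv (deriv φ) τ) (fun τ _ => key τ)]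
  -- now integrate the second derivative of the periodic function φ
  have hφd : Differentiable ℝ φ := hφ2.differentiable (by norm_num)
  have hφ'cd : ContDiff ℝ 1 (deriv φ) := by
    have h2 : ContDiff ℝ ((1 : WithTop ℕ∞) + 1) φ := by
      rw [show ((1 : WithTop ℕ∞) + 1) = 2 by norm_num]; exact hφ2
    exact (contDiff_succ_iff_deriv.mp h2).2.2
  have hint : (∫ τ in (0:ℝ)..(2 * Real.pi), deriv (deriv φ) τ)
      = deriv φ (2 * Real.pi) - deriv φ 0 :=
    intervalIntegral.integral_deriv_eq_sub (fun x _ => (hφ'cd.differentiable one_ne_zero) x)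
      ((hφ'cd.continuous_deriv le_rfl).intervalIntegrable _ _)
  rw [hint]
  -- periodicity of φ and hence of deriv φ
  have hper : ∀ x : ℝ, φ (x + 2 * Real.pi) = φ x := by
    intro x
    simp only [hφdef, hu, Real.cos_add_two_pi, Real.sin_add_two_pi]
  have hD : deriv φ (2 * Real.pi) = deriv φ 0 := by
    have h0 : HasDerivAt (fun x : ℝ => x + 2 * Real.pi) 1 0 :=
      (hasDerivAt_id 0).add_const (2 * Real.pi)
    have h1 : HasDerivAt (fun x => φ (x + 2 * Real.pi)) (deriv φ (0 + 2 * Real.pi) * 1) 0 := by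
      simpa [Function.comp_def] using ((hφd (0 + 2 * Real.pi)).hasDerivAt).comp 0 h0
    rw [show (fun x => φ (x + 2 * Real.pi)) = φ from funext hper] at h1
    have := h1.deriv
    rw [this, zero_add, mul_one]
  rw [hD, sub_self]
end

section
/- Let H : ℝ³ → ℝ be positively homogeneous of degree 1 and twice continuously differentiable on ℝ³ ∖ {0}. Fix a unit vector Ω and orthonormal vectors e₁, e₂ orthogonal to Ω, and set u(τ) = cos τ·e₁ + sin τ·e₂, E(τ) = −sin τ·e₁ + cos τ·e₂, p(ν,τ) = cos ν·u(τ) + sin ν·Ω, and G(ν,τ) = H(p(ν,τ)). Then for every τ ∈ ℝ and every ν with |ν| < π/2, f(0) + f''(0) = G(ν,τ) + (1/cos²ν)·(∂²G/∂τ²)(ν,τ) − tan ν·(∂G/∂ν)(ν,τ), where f(s) = H(cos s·p(ν,τ) + sin s·E(τ)). -/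
open Real
open scoped RealInnerProductSpace

set_option maxHeartbeats 1000000 in
theorem projection_curvature_radius_in_spherical_coordinates
    (H : EuclideanSpace ℝ (Fin 3) → ℝ)
    (hhom : ∀ t : ℝ, 0 ≤ t → ∀ x : EuclideanSpace ℝ (Fin 3), H (t • x) = t * H x)
    (hsmooth : ContDiffOn ℝ 2 H {(0 : EuclideanSpace ℝ (Fin 3))}ᶜ)
    (Ω e₁ e₂ : EuclideanSpace ℝ (Fin 3))
    (hΩ : ‖Ω‖ = 1) (he₁ : ‖e₁‖ = 1) (he₂ : ‖e₂‖ = 1)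
    (h₁₂ : ⟪e₁, e₂⟫ = 0) (h₁Ω : ⟪e₁, Ω⟫ = 0) (h₂Ω : ⟪e₂, Ω⟫ = 0)
    (u E : ℝ → EuclideanSpace ℝ (Fin 3)) (p : ℝ → ℝ → EuclideanSpace ℝ (Fin 3))
    (G : ℝ → ℝ → ℝ)
    (hu : ∀ τ : ℝ, u τ = Real.cos τ • e₁ + Real.sin τ • e₂)
    (hE : ∀ τ : ℝ, E τ = (-Real.sin τ) • e₁ + Real.cos τ • e₂)
    (hp : ∀ ν τ : ℝ, p ν τ = Real.cos ν • u τ + Real.sin ν • Ω)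
    (hG : ∀ ν τ : ℝ, G ν τ = H (p ν τ)) :
    ∀ τ : ℝ, ∀ ν : ℝ, |ν| < Real.pi / 2 →
      (fun s : ℝ => H (Real.cos s • p ν τ + Real.sin s • E τ)) 0 +
        deriv (deriv (fun s : ℝ => H (Real.cos s • p ν τ + Real.sin s • E τ))) 0 =
      G ν τ + (1 / Real.cos ν ^ 2) * deriv (deriv (fun t : ℝ => G ν t)) τ -
        Real.tan ν * deriv (fun s : ℝ => G s τ) ν := by
  intro τ ν hν
  have hνlt := abs_lt.mp hν
  have hcosν : Real.cos ν ≠ 0 := ne_of_gt (Real.cos_pos_of_mem_Ioo ⟨hνlt.1, hνlt.2⟩)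
  -- norms of combinations of orthonormal vectors
  have unit : ∀ v w : EuclideanSpace ℝ (Fin 3), ‖v‖ = 1 → ‖w‖ = 1 → ⟪v, w⟫ = 0 →
      ∀ a b : ℝ, a ^ 2 + b ^ 2 = 1 → ‖a • v + b • w‖ = 1 := by
    intro v w hv hw hvw a b hab
    have h2 : ‖a • v + b • w‖ ^ 2 = 1 := by
      rw [norm_add_sq_real, norm_smul, norm_smul, real_inner_smul_left, real_inner_smul_right,
        hvw, hv, hw]
      simp only [mul_one, mul_zero, add_zero, mul_pow, Real.norm_eq_abs, sq_abs, one_pow]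
      exact hab
    nlinarith [norm_nonneg (a • v + b • w)]
  -- basic inner product facts
  have huΩ : ∀ t : ℝ, ⟪u t, Ω⟫ = 0 := by
    intro t; rw [hu]
    simp only [inner_add_left, real_inner_smul_left, h₁Ω, h₂Ω, mul_zero, add_zero]
  have hunorm : ∀ t : ℝ, ‖u t‖ = 1 := by
    intro t; rw [hu]
    exact unit e₁ e₂ he₁ he₂ h₁₂ _ _ (Real.cos_sq_add_sin_sq t)
  have hEnorm : ‖E τ‖ = 1 := by
    rw [hE]
    exact unit e₁ e₂ he₁ he₂ h₁₂ _ _ (by rw [neg_sq]; exact Real.sin_sq_add_cos_sq τ)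
  have hEΩ : ⟪E τ, Ω⟫ = 0 := by
    rw [hE]
    simp only [inner_add_left, real_inner_smul_left, h₁Ω, h₂Ω, mul_zero, add_zero]
  have hΩE : ⟪Ω, E τ⟫ = 0 := by rw [real_inner_comm]; exact hEΩ
  have h₂₁ : ⟪e₂, e₁⟫ = 0 := by rw [real_inner_comm]; exact h₁₂
  have huE : ⟪u τ, E τ⟫ = 0 := by
    rw [hu, hE]
    simp only [inner_add_left, inner_add_right, real_inner_smul_left, real_inner_smul_right,
      h₁₂, h₂₁, real_inner_self_eq_norm_sq, he₁, he₂]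
    ring
  have hpnorm : ∀ a b : ℝ, ‖p a b‖ = 1 := fun a b => by
    rw [hp]
    exact unit (u b) Ω (hunorm b) hΩ (huΩ b) _ _ (Real.cos_sq_add_sin_sq a)
  have hpne : ∀ a b : ℝ, p a b ≠ 0 := fun a b =>
    norm_ne_zero_iff.mp (by rw [hpnorm]; norm_num)
  have hqE : ⟪p ν τ, E τ⟫ = 0 := by
    rw [hp]
    simp only [inner_add_left, real_inner_smul_left, huE, hΩE, mul_zero, add_zero]
  have cne : ∀ s : ℝ, Real.cos s • p ν τ + Real.sin s • E τ ≠ 0 := fun s =>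
    norm_ne_zero_iff.mp (by
      rw [unit (p ν τ) (E τ) (hpnorm ν τ) hEnorm hqE _ _ (Real.cos_sq_add_sin_sq s)]
      norm_num)
  -- differentiability of H away from 0
  have hH1 : ∀ x : EuclideanSpace ℝ (Fin 3), x ≠ 0 → HasFDerivAt H (fderiv ℝ H x) x := fun x hx =>
    ((hsmooth.contDiffAt (compl_singleton_mem_nhds hx)).differentiableAt (by norm_num)).hasFDerivAt
  have hH2 : HasFDerivAt (fderiv ℝ H) (fderiv ℝ (fderiv ℝ H) (p ν τ)) (p ν τ) :=
    (((hsmooth.contDiffAt (compl_singleton_mem_nhds (hpne ν τ))).fderiv_right (m := 1)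
      (by norm_num)).differentiableAt one_ne_zero).hasFDerivAt
  -- derivative of circles
  have hcurve : ∀ (v w : EuclideanSpace ℝ (Fin 3)) (s : ℝ),
      HasDerivAt (fun s : ℝ => Real.cos s • v + Real.sin s • w)
        ((-Real.sin s) • v + Real.cos s • w) s :=
    fun v w s => ((Real.hasDerivAt_cos s).smul_const v).add ((Real.hasDerivAt_sin s).smul_const w)
  have hc0 : Real.cos 0 • p ν τ + Real.sin 0 • E τ = p ν τ := by simp
  -- abbreviations
  set L : EuclideanSpace ℝ (Fin 3) →L[ℝ] ℝ := fderiv ℝ H (p ν τ) with hL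
  set M : EuclideanSpace ℝ (Fin 3) →L[ℝ] EuclideanSpace ℝ (Fin 3) →L[ℝ] ℝ :=
    fderiv ℝ (fderiv ℝ H) (p ν τ) with hM
  -- first derivative of f
  have hf1 : ∀ s : ℝ, HasDerivAt (fun s : ℝ => H (Real.cos s • p ν τ + Real.sin s • E τ))
      ((fderiv ℝ H (Real.cos s • p ν τ + Real.sin s • E τ))
        ((-Real.sin s) • p ν τ + Real.cos s • E τ)) s := fun s =>
    (hH1 _ (cne s)).comp_hasDerivAt s (hcurve _ _ s)
  have hderiv1 : deriv (fun s : ℝ => H (Real.cos s • p ν τ + Real.sin s • E τ)) =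
      fun s : ℝ => (fderiv ℝ H (Real.cos s • p ν τ + Real.sin s • E τ))
        ((-Real.sin s) • p ν τ + Real.cos s • E τ) :=
    funext fun s => (hf1 s).deriv
  -- second derivative of f at 0
  have hH2' : HasFDerivAt (fderiv ℝ H) M (Real.cos 0 • p ν τ + Real.sin 0 • E τ) := by rw [hc0]; exact hH2
  have hA : HasDerivAt (fun s : ℝ => fderiv ℝ H (Real.cos s • p ν τ + Real.sin s • E τ))
      (M ((-Real.sin 0) • p ν τ + Real.cos 0 • E τ)) 0 :=
    hH2'.comp_hasDerivAt 0 (hcurve (p ν τ) (E τ) 0)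
  have hB : HasDerivAt (fun s : ℝ => (-Real.sin s) • p ν τ + Real.cos s • E τ)
      ((-Real.cos 0) • p ν τ + (-Real.sin 0) • E τ) 0 :=
    (((Real.hasDerivAt_sin 0).neg).smul_const (p ν τ)).add
      ((Real.hasDerivAt_cos 0).smul_const (E τ))
  have hsecond : deriv (deriv (fun s : ℝ => H (Real.cos s • p ν τ + Real.sin s • E τ))) 0 =
      M (E τ) (E τ) - L (p ν τ) := by
    rw [hderiv1, (hA.clm_apply hB).deriv]
    simp [hc0, map_neg, sub_eq_add_neg, ← hL]
  -- derivative in τ of G ν ·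
  have hGν : (fun t : ℝ => G ν t) =
      fun t : ℝ => H (Real.cos ν • (Real.cos t • e₁ + Real.sin t • e₂) + Real.sin ν • Ω) :=
    funext fun t => by rw [hG, hp, hu]
  have hrne : ∀ t : ℝ,
      Real.cos ν • (Real.cos t • e₁ + Real.sin t • e₂) + Real.sin ν • Ω ≠ 0 := fun t => by
    rw [← hu, ← hp]; exact hpne ν t
  have hrderiv : ∀ t : ℝ, HasDerivAt
      (fun t : ℝ => Real.cos ν • (Real.cos t • e₁ + Real.sin t • e₂) + Real.sin ν • Ω)
      (Real.cos ν • ((-Real.sin t) • e₁ + Real.cos t • e₂)) t :=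
    fun t => ((hcurve e₁ e₂ t).const_smul (Real.cos ν)).add_const _
  have hg1 : ∀ t : ℝ, HasDerivAt
      (fun t : ℝ => H (Real.cos ν • (Real.cos t • e₁ + Real.sin t • e₂) + Real.sin ν • Ω))
      ((fderiv ℝ H (Real.cos ν • (Real.cos t • e₁ + Real.sin t • e₂) + Real.sin ν • Ω))
        (Real.cos ν • ((-Real.sin t) • e₁ + Real.cos t • e₂))) t := fun t =>
    (hH1 _ (hrne t)).comp_hasDerivAt t (hrderiv t)
  have hderiv2 : deriv (fun t : ℝ => G ν t) =
      fun t : ℝ => (fderiv ℝ H (Real.cos ν • (Real.cos t • e₁ + Real.sin t • e₂) + Real.sin ν • Ω))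
        (Real.cos ν • ((-Real.sin t) • e₁ + Real.cos t • e₂)) := by
    rw [hGν]; exact funext fun t => (hg1 t).deriv
  have hrτ : Real.cos ν • (Real.cos τ • e₁ + Real.sin τ • e₂) + Real.sin ν • Ω = p ν τ := by
    rw [hp, hu]
  have hH2'' : HasFDerivAt (fderiv ℝ H) M
      (Real.cos ν • (Real.cos τ • e₁ + Real.sin τ • e₂) + Real.sin ν • Ω) := by rw [hrτ]; exact hH2
  have hA2 : HasDerivAt
      (fun t : ℝ => fderiv ℝ H (Real.cos ν • (Real.cos t • e₁ + Real.sin t • e₂) + Real.sin ν • Ω))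
      (M (Real.cos ν • ((-Real.sin τ) • e₁ + Real.cos τ • e₂))) τ :=
    hH2''.comp_hasDerivAt τ (hrderiv τ)
  have hB2 : HasDerivAt (fun t : ℝ => Real.cos ν • ((-Real.sin t) • e₁ + Real.cos t • e₂))
      (Real.cos ν • ((-Real.cos τ) • e₁ + (-Real.sin τ) • e₂)) τ :=
    ((((Real.hasDerivAt_sin τ).neg).smul_const e₁).add
      ((Real.hasDerivAt_cos τ).smul_const e₂)).const_smul (Real.cos ν)
  have hsecond2 : deriv (deriv (fun t : ℝ => G ν t)) τ =
      M (Real.cos ν • ((-Real.sin τ) • e₁ + Real.cos τ • e₂))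
        (Real.cos ν • ((-Real.sin τ) • e₁ + Real.cos τ • e₂)) +
      L (Real.cos ν • ((-Real.cos τ) • e₁ + (-Real.sin τ) • e₂)) := by
    rw [hderiv2, (hA2.clm_apply hB2).deriv, hrτ]
  -- derivative in ν of G · τ
  have hGτ : (fun s : ℝ => G s τ) = fun s : ℝ => H (Real.cos s • u τ + Real.sin s • Ω) :=
    funext fun s => by rw [hG, hp]
  have hsne : ∀ s : ℝ, Real.cos s • u τ + Real.sin s • Ω ≠ 0 := fun s => by
    rw [← hp]; exact hpne s τ
  have hpν : Real.cos ν • u τ + Real.sin ν • Ω = p ν τ := (hp ν τ).symm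
  have hderiv3 : deriv (fun s : ℝ => G s τ) ν = L ((-Real.sin ν) • u τ + Real.cos ν • Ω) := by
    rw [hGτ]
    have := ((hH1 _ (hsne ν)).comp_hasDerivAt ν (hcurve (u τ) Ω ν)).deriv
    simp only [Function.comp_def] at this
    rw [this, hpν]
  -- assemble
  have hEτ : E τ = (-Real.sin τ) • e₁ + Real.cos τ • e₂ := hE τ
  have hsimp0 : (fun s : ℝ => H (Real.cos s • p ν τ + Real.sin s • E τ)) 0 = H (p ν τ) := by
    simp
  rw [hsimp0, hsecond, hsecond2, hderiv3, hG, hp, hu, hEτ]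
  simp only [map_add, map_smul, map_neg, smul_eq_mul, ContinuousLinearMap.smul_apply,
    ContinuousLinearMap.map_add, ContinuousLinearMap.map_smul, ContinuousLinearMap.map_neg,
    ContinuousLinearMap.add_apply, ContinuousLinearMap.neg_apply, Real.tan_eq_sin_div_cos]
  field_simp
  linear_combination ((-(Real.cos τ * L e₁) - Real.sin τ * L e₂) * Real.cos ν ^ 2 +
    (Real.cos τ * L e₁ + Real.sin τ * L e₂) * (Real.cos ν ^ 2 - 1)) *
    (Real.sin_sq_add_cos_sq ν)
end
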